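/- Let ρ > 0, let 𝒜 = [α̲, ᾱ] ⊂ ℝ be a nonempty closed interval, and let A be a real n×n matrix, B : ℝ → (real n×m matrices) a matrix-valued function, C a real p×n matrix, D a real p×m matrix, M a symmetric real p×p matrix, P a symmetric positive definite real n×n matrix, and λ ≥ 0. Suppose that for every α ∈ 𝒜 the linear matrix inequality [[AᵀPA − ρ²P, AᵀPB(α)],[B(α)ᵀPA, B(α)ᵀPB(α)]] + λ·[C D]ᵀ M [C D] ⪯ 0 holds. Let α : ℕ → ℝ be any sequence with α_k ∈ 𝒜 for all k, and let x : ℕ → ℝⁿ, u : ℕ → ℝᵐ, z : ℕ → ℝᵖ satisfy x_{k+1} = A x_k + B(α_k) u_k and z_k = C x_k + D u_k for all k, with the ρ-hard IQC sum condition: for every N, Σ_{k=0}^{N} ρ^{−2k} z_kᵀ M z_k ≥ 0. Then for all k ≥ 0, x_kᵀ P x_k ≤ ρ^{2k} x₀ᵀ P x₀, and consequently ‖x_k‖ ≤ √(cond(P)) · ρ^k · ‖x₀‖. -/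

import Mathlib

open Matrix

private lemma dot_sandwich {a b c : Type*} [Fintype a] [Fintype b] [Fintype c]
    (E : Matrix c a ℝ) (P : Matrix c c ℝ) (F : Matrix c b ℝ) (v : a → ℝ) (w : b → ℝ) :
    v ⬝ᵥ ((Eᵀ * P * F) *ᵥ w) = (E *ᵥ v) ⬝ᵥ (P *ᵥ (F *ᵥ w)) := by
  rw [← mulVec_mulVec, ← mulVec_mulVec, dotProduct_mulVec, vecMul_transpose]

private lemma rayleigh {n : Type*} [Fintype n] [DecidableEq n] [Nonempty n]
    (P : Matrix n n ℝ) (hP : P.IsHermitian) (x : n → ℝ) :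
    (⨅ i, hP.eigenvalues i) * (x ⬝ᵥ x) ≤ x ⬝ᵥ (P *ᵥ x) ∧
      x ⬝ᵥ (P *ᵥ x) ≤ (⨆ i, hP.eigenvalues i) * (x ⬝ᵥ x) := by
  set U : Matrix n n ℝ := (hP.eigenvectorUnitary : Matrix n n ℝ) with hU
  set e := hP.eigenvalues with he
  set y : n → ℝ := star U *ᵥ x with hy
  have hstar : star U = Uᵀ := by
    ext i j
    simp [conjTranspose_apply]
  have hyU : y = x ᵥ* U := by rw [hy, hstar, mulVec_transpose]
  have hUy : U *ᵥ y = x := by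
    rw [hy, mulVec_mulVec, mem_unitaryGroup_iff.mp hP.eigenvectorUnitary.2, one_mulVec]
  have h1 : x ⬝ᵥ (P *ᵥ x) = ∑ i, e i * (y i) ^ 2 := by
    conv_lhs => rw [hP.spectral_theorem, Unitary.conjStarAlgAut_apply]
    rw [← mulVec_mulVec, ← mulVec_mulVec, dotProduct_mulVec, ← hyU, ← hy]
    simp only [dotProduct, mulVec_diagonal]
    refine Finset.sum_congr rfl fun i _ => ?_
    simp [Function.comp]
    ring
  have h2 : x ⬝ᵥ x = ∑ i, (y i) ^ 2 := by
    have key : y ⬝ᵥ y = x ⬝ᵥ x := by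
      nth_rewrite 2 [hy]
      rw [dotProduct_mulVec, hstar, vecMul_transpose, hUy]
    rw [← key]
    simp [dotProduct, sq]
  have hbddA : BddAbove (Set.range e) := Set.Finite.bddAbove (Set.finite_range e)
  have hbddB : BddBelow (Set.range e) := Set.Finite.bddBelow (Set.finite_range e)
  constructor
  · rw [h1, h2, Finset.mul_sum]
    exact Finset.sum_le_sum fun i _ =>
      mul_le_mul_of_nonneg_right (ciInf_le hbddB i) (sq_nonneg _)
  · rw [h1, h2, Finset.mul_sum]
    exact Finset.sum_le_sum fun i _ =>
      mul_le_mul_of_nonneg_right (le_ciSup hbddA i) (sq_nonneg _)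

theorem stmt_1 {n m p : ℕ} (ρ : ℝ) (hρ : 0 < ρ)
    (αlo αhi : ℝ) (hA : αlo ≤ αhi)
    (A : Matrix (Fin n) (Fin n) ℝ) (B : ℝ → Matrix (Fin n) (Fin m) ℝ)
    (C : Matrix (Fin p) (Fin n) ℝ) (D : Matrix (Fin p) (Fin m) ℝ)
    (M : Matrix (Fin p) (Fin p) ℝ) (hM : M.IsSymm)
    (P : Matrix (Fin n) (Fin n) ℝ) (hPsymm : P.IsSymm) (hP : P.PosDef)
    (lam : ℝ) (hlam : 0 ≤ lam)
    (hLMI : ∀ α ∈ Set.Icc αlo αhi, ∀ v : Fin n ⊕ Fin m → ℝ,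
      v ⬝ᵥ ((Matrix.fromBlocks (Aᵀ * P * A - ρ ^ 2 • P) (Aᵀ * P * B α)
              ((B α)ᵀ * P * A) ((B α)ᵀ * P * B α)
            + lam • ((Matrix.fromCols C D)ᵀ * M * Matrix.fromCols C D)) *ᵥ v) ≤ 0)
    (α : ℕ → ℝ) (hα : ∀ k, α k ∈ Set.Icc αlo αhi)
    (x : ℕ → Fin n → ℝ) (u : ℕ → Fin m → ℝ) (z : ℕ → Fin p → ℝ)
    (hx : ∀ k, x (k + 1) = A *ᵥ x k + B (α k) *ᵥ u k)
    (hz : ∀ k, z k = C *ᵥ x k + D *ᵥ u k)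
    (hIQC : ∀ N : ℕ, 0 ≤ ∑ k ∈ Finset.range (N + 1),
      (ρ ^ (2 * k))⁻¹ * (z k ⬝ᵥ (M *ᵥ z k))) :
    ∀ k : ℕ,
      x k ⬝ᵥ (P *ᵥ x k) ≤ ρ ^ (2 * k) * (x 0 ⬝ᵥ (P *ᵥ x 0)) ∧
      Real.sqrt (x k ⬝ᵥ x k) ≤
        Real.sqrt ((⨆ i, hP.1.eigenvalues i) / (⨅ i, hP.1.eigenvalues i)) * ρ ^ k *
          Real.sqrt (x 0 ⬝ᵥ x 0) := by
  set V : ℕ → ℝ := fun k => x k ⬝ᵥ (P *ᵥ x k) with hV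
  set w : ℕ → ℝ := fun k => z k ⬝ᵥ (M *ᵥ z k) with hw
  -- dissipation step
  have step : ∀ k, V (k + 1) ≤ ρ ^ 2 * V k - lam * w k := by
    intro k
    have h := hLMI (α k) (hα k) (Sum.elim (x k) (u k))
    have key : (Sum.elim (x k) (u k)) ⬝ᵥ
        ((Matrix.fromBlocks (Aᵀ * P * A - ρ ^ 2 • P) (Aᵀ * P * B (α k))
            ((B (α k))ᵀ * P * A) ((B (α k))ᵀ * P * B (α k))
          + lam • ((Matrix.fromCols C D)ᵀ * M * Matrix.fromCols C D)) *ᵥ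
          (Sum.elim (x k) (u k)))
        = V (k + 1) - ρ ^ 2 * V k + lam * w k := by
      rw [add_mulVec, dotProduct_add, smul_mulVec, dotProduct_smul, smul_eq_mul,
        dot_sandwich, fromCols_mulVec_sumElim, ← hz k]
      rw [fromBlocks_mulVec, sumElim_dotProduct_sumElim]
      simp only [Sum.elim_comp_inl, Sum.elim_comp_inr]
      rw [sub_mulVec, dotProduct_add, dotProduct_sub, dotProduct_add]
      rw [dot_sandwich, dot_sandwich, dot_sandwich, dot_sandwich,
        smul_mulVec, dotProduct_smul, smul_eq_mul]
      simp only [hV, hw, hx k, mulVec_add, dotProduct_add, add_dotProduct]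
      ring
    rw [key] at h
    linarith
  -- telescoping
  have tele : ∀ N : ℕ, (ρ ^ (2 * N))⁻¹ * V N ≤
      V 0 - lam * ∑ k ∈ Finset.range N, (ρ ^ (2 * (k + 1)))⁻¹ * w k := by
    intro N
    induction N with
    | zero => simp
    | succ N ih =>
      have hpow : (0:ℝ) < ρ ^ (2 * (N + 1)) := pow_pos hρ _
      have h1 : (ρ ^ (2 * (N + 1)))⁻¹ * V (N + 1) ≤
          (ρ ^ (2 * (N + 1)))⁻¹ * (ρ ^ 2 * V N - lam * w N) :=
        mul_le_mul_of_nonneg_left (step N) (le_of_lt (inv_pos.mpr hpow))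
      have h2 : (ρ ^ (2 * (N + 1)))⁻¹ * (ρ ^ 2 * V N) = (ρ ^ (2 * N))⁻¹ * V N := by
        have : ρ ^ (2 * (N + 1)) = ρ ^ (2 * N) * ρ ^ 2 := by ring
        rw [this, mul_inv]
        field_simp
      rw [Finset.sum_range_succ]
      calc (ρ ^ (2 * (N + 1)))⁻¹ * V (N + 1)
          ≤ (ρ ^ (2 * (N + 1)))⁻¹ * (ρ ^ 2 * V N) - (ρ ^ (2 * (N + 1)))⁻¹ * (lam * w N) := by
            rw [← mul_sub]; exact h1
        _ = (ρ ^ (2 * N))⁻¹ * V N - lam * ((ρ ^ (2 * (N + 1)))⁻¹ * w N) := by rw [h2]; ring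
        _ ≤ V 0 - lam * ∑ k ∈ Finset.range N, (ρ ^ (2 * (k + 1)))⁻¹ * w k
              - lam * ((ρ ^ (2 * (N + 1)))⁻¹ * w N) := by linarith
        _ = V 0 - lam * (∑ k ∈ Finset.range N, (ρ ^ (2 * (k + 1)))⁻¹ * w k
              + (ρ ^ (2 * (N + 1)))⁻¹ * w N) := by ring
  -- the sums are nonnegative
  have sumnn : ∀ N : ℕ, 0 ≤ ∑ k ∈ Finset.range N, (ρ ^ (2 * (k + 1)))⁻¹ * w k := by
    intro N
    cases N with
    | zero => simp
    | succ N =>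
      have := hIQC N
      have heq : ∑ k ∈ Finset.range (N + 1), (ρ ^ (2 * (k + 1)))⁻¹ * w k
          = (ρ ^ 2)⁻¹ * ∑ k ∈ Finset.range (N + 1), (ρ ^ (2 * k))⁻¹ * w k := by
        rw [Finset.mul_sum]
        refine Finset.sum_congr rfl fun k _ => ?_
        have : ρ ^ (2 * (k + 1)) = ρ ^ 2 * ρ ^ (2 * k) := by ring
        rw [this, mul_inv, mul_assoc]
      rw [heq]
      exact mul_nonneg (inv_nonneg.mpr (le_of_lt (pow_pos hρ 2))) this
  have main : ∀ k, V k ≤ ρ ^ (2 * k) * V 0 := by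
    intro k
    have h1 : (ρ ^ (2 * k))⁻¹ * V k ≤ V 0 := by
      have := tele k
      have := mul_nonneg hlam (sumnn k)
      linarith
    have hpow : (0:ℝ) < ρ ^ (2 * k) := pow_pos hρ _
    calc V k = ρ ^ (2 * k) * ((ρ ^ (2 * k))⁻¹ * V k) := by field_simp
    _ ≤ ρ ^ (2 * k) * V 0 := mul_le_mul_of_nonneg_left h1 (le_of_lt hpow)
  intro k
  refine ⟨main k, ?_⟩
  rcases Nat.eq_zero_or_pos n with hn | hn
  · subst hn
    have : x k ⬝ᵥ x k = 0 := by simp [dotProduct]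
    rw [this, Real.sqrt_zero]
    positivity
  · haveI : Nonempty (Fin n) := ⟨⟨0, hn⟩⟩
    set emin := ⨅ i, hP.1.eigenvalues i with hemin
    set emax := ⨆ i, hP.1.eigenvalues i with hemax
    have hbddA : BddAbove (Set.range hP.1.eigenvalues) :=
      Set.Finite.bddAbove (Set.finite_range _)
    have hbddB : BddBelow (Set.range hP.1.eigenvalues) :=
      Set.Finite.bddBelow (Set.finite_range _)
    have heminpos : 0 < emin := by
      obtain ⟨i, hi⟩ := exists_eq_ciInf_of_finite (f := hP.1.eigenvalues)
      rw [hemin, ← hi]; exact hP.eigenvalues_pos i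
    have hemaxpos : 0 < emax := lt_of_lt_of_le (hP.eigenvalues_pos (Classical.arbitrary _))
      (le_ciSup hbddA _)
    have hlo := (rayleigh P hP.1 (x k)).1
    have hhi := (rayleigh P hP.1 (x 0)).2
    have hxx : x k ⬝ᵥ x k ≤ emax / emin * ρ ^ (2 * k) * (x 0 ⬝ᵥ x 0) := by
      rw [div_mul_eq_mul_div, div_mul_eq_mul_div, le_div_iff₀ heminpos]
      have h1 : emin * (x k ⬝ᵥ x k) ≤ ρ ^ (2 * k) * (emax * (x 0 ⬝ᵥ x 0)) :=
        le_trans hlo (le_trans (main k)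
          (mul_le_mul_of_nonneg_left hhi (le_of_lt (pow_pos hρ _))))
      nlinarith
    calc Real.sqrt (x k ⬝ᵥ x k) ≤ Real.sqrt (emax / emin * ρ ^ (2 * k) * (x 0 ⬝ᵥ x 0)) :=
          Real.sqrt_le_sqrt hxx
      _ = Real.sqrt (emax / emin) * ρ ^ k * Real.sqrt (x 0 ⬝ᵥ x 0) := by
          rw [Real.sqrt_mul (by positivity), Real.sqrt_mul (by positivity)]
          congr 1
          rw [two_mul, pow_add, ← sq, Real.sqrt_sq (by positivity)]
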